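/- Let q be a nonzero complex number which is not a root of unity, and consider the vector space V with basis given by nonincreasing sequences (k_n, …, k₁) of nonnegative integers of length n, with operators E₁(k_n,…,k₁) = (k_n,…,k₁+1), E_i(k_n,…,k₁) = ([k_i+1-k_{i-1}]_q/[k_i+1]_q)(k_n,…,k_i+1,…,k₁) for i > 1, and E₀(k_n,…,k₁) = (a q^{1-k_n} ∏_{i=1}^n [k_i]_q / (1-q²)) (k_n-1,…,k₁-1), where a sequence that is not nonincreasing or has a negative entry is interpreted as the zero vector. Then E₀ commutes with E_i for all 2 ≤ i ≤ n-1, and E₀ and E_n satisfy E_n² E₀ - (q+q⁻¹) E_n E₀ E_n + E₀ E_n² = 0. -/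

import Mathlib

noncomputable section

/-- Balanced quantum integer [m]_q = (q^m - q^{-m})/(q - q⁻¹) for q ∈ ℂ. -/
def qint (q : ℂ) (m : ℤ) : ℂ := (q ^ m - q ^ (-m)) / (q - q⁻¹)

/-- Nonincreasing sequences (k_n, …, k₁) of nonnegative integers:
`k i` is `k_{i+1}`, so nonincreasing means `Monotone`. -/
def DescSeq (n : ℕ) : Type := {f : Fin n → ℕ // Monotone f}

/-- The vector space with basis the nonincreasing sequences. -/
def Vn (n : ℕ) : Type := DescSeq n →₀ ℂ

instance (n : ℕ) : AddCommGroup (Vn n) := Finsupp.instAddCommGroup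
instance (n : ℕ) : Module ℂ (Vn n) := Finsupp.module _ _

/-- Coefficient of the raising operator E_{i+1} (0-indexed `i`): it is 1 for
E₁ and `[k_i + 1 - k_{i-1}]_q / [k_i + 1]_q` for i > 1 (1-indexed). -/
def coeffE (q : ℂ) {n : ℕ} (i : Fin n) (k : DescSeq n) : ℂ :=
  if (i : ℕ) = 0 then 1
  else qint q ((k.1 i : ℤ) + 1
        - (k.1 ⟨(i : ℕ) - 1, Nat.lt_of_le_of_lt (Nat.sub_le _ _) i.isLt⟩ : ℤ))
      / qint q ((k.1 i : ℤ) + 1)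

/-- Image of the basis vector `k` under E_{i+1}: increment `k_{i+1}`; a sequence
that is no longer nonincreasing is interpreted as the zero vector. -/
def vecE (q : ℂ) {n : ℕ} (i : Fin n) (k : DescSeq n) : Vn n :=
  if h : Monotone (Function.update k.1 i (k.1 i + 1))
  then coeffE q i k • Finsupp.single (⟨_, h⟩ : DescSeq n) (1 : ℂ)
  else 0

/-- The operator E_{i+1} (0-indexed `i`). -/
def opE (q : ℂ) {n : ℕ} (i : Fin n) : Module.End ℂ (Vn n) :=
  Finsupp.lsum ℂ fun k => LinearMap.toSpanSingleton ℂ (Vn n) (vecE q i k)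

/-- Image of the basis vector `k` under E₀: coefficient
`a q^{1-k_n} ∏ [k_i]_q / (1-q²)`, decrementing every entry (if some `k_i = 0`
the coefficient vanishes, matching the convention that sequences with a
negative entry are zero). -/
def vecE0 (q a : ℂ) {n : ℕ} (hn : 0 < n) (k : DescSeq n) : Vn n :=
  (a * q ^ ((1 : ℤ) - (k.1 ⟨n - 1, Nat.sub_lt hn Nat.one_pos⟩ : ℤ))
      * (∏ j : Fin n, qint q (k.1 j)) / (1 - q ^ 2)) •
    Finsupp.single
      (⟨fun j => k.1 j - 1, fun _ _ hab => Nat.sub_le_sub_right (k.2 hab) 1⟩ : DescSeq n)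
      (1 : ℂ)

/-- The operator E₀. -/
def opE0 (q a : ℂ) {n : ℕ} (hn : 0 < n) : Module.End ℂ (Vn n) :=
  Finsupp.lsum ℂ fun k => LinearMap.toSpanSingleton ℂ (Vn n) (vecE0 q a hn k)

namespace Stmt18Aux

lemma qint_zero (q : ℂ) : qint q 0 = 0 := by simp [qint]

variable {q : ℂ}

lemma one_sub_sq_ne (hq : ∀ m : ℕ, 0 < m → q ^ m ≠ 1) : (1 : ℂ) - q ^ 2 ≠ 0 :=
  sub_ne_zero.mpr (Ne.symm (hq 2 (by norm_num)))

lemma qden_ne (hq0 : q ≠ 0) (hq : ∀ m : ℕ, 0 < m → q ^ m ≠ 1) : q - q⁻¹ ≠ 0 := by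
  rw [sub_ne_zero]
  intro h
  apply hq 2 (by norm_num)
  calc q ^ 2 = q * q := sq q
    _ = q * q⁻¹ := by rw [← h]
    _ = 1 := mul_inv_cancel₀ hq0

lemma qpow_int_ne_one (hq0 : q ≠ 0) (hq : ∀ m : ℕ, 0 < m → q ^ m ≠ 1)
    {m : ℤ} (hm : 0 < m) : q ^ m ≠ 1 := by
  lift m to ℕ using hm.le
  rw [zpow_natCast]
  exact hq m (by exact_mod_cast hm)

lemma qint_ne (hq0 : q ≠ 0) (hq : ∀ m : ℕ, 0 < m → q ^ m ≠ 1)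
    {m : ℤ} (hm : 0 < m) : qint q m ≠ 0 := by
  unfold qint
  apply div_ne_zero _ (qden_ne hq0 hq)
  rw [sub_ne_zero]
  intro h
  apply qpow_int_ne_one hq0 hq (show (0:ℤ) < m + m by omega)
  rw [zpow_add₀ hq0]
  nth_rewrite 1 [h]
  rw [← zpow_add₀ hq0, neg_add_cancel, zpow_zero]

lemma monotone_update_succ {n : ℕ} (k : DescSeq n) (i : Fin n)
    (h2 : ∀ b, i < b → k.1 i + 1 ≤ k.1 b) :
    Monotone (Function.update k.1 i (k.1 i + 1)) := by
  intro x y hxy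
  by_cases hx : x = i <;> by_cases hy : y = i
  · rw [hx, hy]
  · rw [hx, Function.update_self, Function.update_of_ne hy]
    exact h2 y (lt_of_le_of_ne (hx ▸ hxy) (Ne.symm hy))
  · rw [hy, Function.update_self, Function.update_of_ne hx]
    exact (k.2 (hxy.trans (le_of_eq hy))).trans (Nat.le_succ _)
  · rw [Function.update_of_ne hx, Function.update_of_ne hy]
    exact k.2 hxy

lemma not_mono_update {n : ℕ} (k : DescSeq n) (i : Fin n) (hi : (i:ℕ)+1 < n)
    (he : k.1 i = k.1 ⟨(i:ℕ)+1, hi⟩) :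
    ¬ Monotone (Function.update k.1 i (k.1 i + 1)) := by
  intro h
  have hle : i ≤ (⟨(i:ℕ)+1, hi⟩ : Fin n) := by
    rw [Fin.le_def]; simp
  have := h hle
  rw [Function.update_self, Function.update_of_ne (by simp [Fin.ext_iff])] at this
  omega

lemma top_lt {n : ℕ} (hn : 0 < n) : n - 1 < n := Nat.sub_lt hn Nat.one_pos

def raiseSeq {n : ℕ} (hn : 0 < n) (l : DescSeq n) : DescSeq n :=
  ⟨Function.update l.1 ⟨n - 1, top_lt hn⟩ (l.1 ⟨n - 1, top_lt hn⟩ + 1),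
   monotone_update_succ l ⟨n - 1, top_lt hn⟩ (fun b hb => by
     exfalso
     rw [Fin.lt_def] at hb
     have h1 : n - 1 < (b : ℕ) := hb
     have h2 := b.isLt
     omega)⟩

def lowSeq {n : ℕ} (l : DescSeq n) : DescSeq n :=
  ⟨fun j => l.1 j - 1, fun _ _ hab => Nat.sub_le_sub_right (l.2 hab) 1⟩

lemma end_ext {n : ℕ} {f g : Module.End ℂ (Vn n)}
    (h : ∀ (k : DescSeq n) (b : ℂ), f (id (Finsupp.single k b) : Vn n) = g (id (Finsupp.single k b) : Vn n)) :
    f = g :=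
  Finsupp.lhom_ext h

lemma opE_single {n : ℕ} (q : ℂ) (i : Fin n) (k : DescSeq n) (b : ℂ) :
    opE q i (Finsupp.single k b) = b • vecE q i k := by
  show Finsupp.lsum ℂ (fun k => LinearMap.toSpanSingleton ℂ (Vn n) (vecE q i k))
      (Finsupp.single k b) = b • vecE q i k
  rw [Finsupp.lsum_single, LinearMap.toSpanSingleton_apply]

lemma opE0_single {n : ℕ} (q a : ℂ) (hn : 0 < n) (k : DescSeq n) (b : ℂ) :
    opE0 q a hn (Finsupp.single k b) = b • vecE0 q a hn k := by
  show Finsupp.lsum ℂ (fun k => LinearMap.toSpanSingleton ℂ (Vn n) (vecE0 q a hn k))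
      (Finsupp.single k b) = b • vecE0 q a hn k
  rw [Finsupp.lsum_single, LinearMap.toSpanSingleton_apply]


lemma comm_key {n : ℕ} (hn : 2 ≤ n) (q a : ℂ) (hq0 : q ≠ 0)
    (hq : ∀ m : ℕ, 0 < m → q ^ m ≠ 1) (i : Fin n) (hi1 : 1 ≤ (i:ℕ)) (hi2 : (i:ℕ) ≤ n - 2)
    (k : DescSeq n) :
    opE0 q a (lt_of_lt_of_le two_pos hn) (vecE q i k)
      = opE q i (vecE0 q a (lt_of_lt_of_le two_pos hn) k) := by
  have hn0 : 0 < n := by omega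
  have hisl : (i:ℕ) + 1 < n := by omega
  set isuc : Fin n := ⟨(i:ℕ)+1, hisl⟩ with hisuc
  have hle : k.1 i ≤ k.1 isuc := k.2 (by rw [Fin.le_def]; simp [hisuc])
  set km1 : DescSeq n :=
    ⟨fun j => k.1 j - 1, fun _ _ hab => Nat.sub_le_sub_right (k.2 hab) 1⟩ with hkm1
  have hrhs : opE q i (vecE0 q a hn0 k)
      = (a * q ^ ((1 : ℤ) - (k.1 ⟨n - 1, Nat.sub_lt hn0 Nat.one_pos⟩ : ℤ))
          * (∏ j : Fin n, qint q (k.1 j)) / (1 - q ^ 2)) • vecE q i km1 := by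
    rw [vecE0]
    erw [map_smul, opE_single]
    rw [one_smul]
  rw [hrhs]
  by_cases hlt : k.1 i < k.1 isuc
  · -- monotone case
    have hmono : Monotone (Function.update k.1 i (k.1 i + 1)) :=
      monotone_update_succ k i (fun b hb => by
        have hb2 : isuc ≤ b := by rw [Fin.le_def]; exact hb
        have := k.2 hb2
        omega)
    erw [vecE, dif_pos hmono, map_smul, opE0_single, one_smul]
    set k' : DescSeq n := ⟨Function.update k.1 i (k.1 i + 1), hmono⟩ with hk'
    by_cases hz : k.1 ⟨0, by omega⟩ = 0
    · -- zero entry: both sides vanish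
      have hne0 : (⟨0, by omega⟩ : Fin n) ≠ i := by
        simp only [Fin.ne_iff_vne]; omega
      have hp1 : (∏ j : Fin n, qint q (k'.1 j)) = 0 := by
        apply Finset.prod_eq_zero (Finset.mem_univ (⟨0, by omega⟩ : Fin n))
        rw [hk']
        show qint q ((Function.update k.1 i (k.1 i + 1) ⟨0, by omega⟩ : ℕ) : ℤ) = 0
        rw [Function.update_of_ne hne0, hz]
        simpa using qint_zero q
      have hp2 : (∏ j : Fin n, qint q (k.1 j)) = 0 := by
        apply Finset.prod_eq_zero (Finset.mem_univ (⟨0, by omega⟩ : Fin n))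
        rw [hz]
        simpa using qint_zero q
      rw [vecE0, hp1, hp2]
      simp
      exact Or.inr (zero_smul _ _)
    · -- all entries positive: main computation
      have hpos : ∀ j, 1 ≤ k.1 j := fun j => by
        have := k.2 (show (⟨0, by omega⟩ : Fin n) ≤ j by
          rw [Fin.le_def]; exact Nat.zero_le _)
        omega
      have hmono1 : Monotone (Function.update km1.1 i (km1.1 i + 1)) :=
        monotone_update_succ km1 i (fun b hb => by
          have hb2 : isuc ≤ b := by rw [Fin.le_def]; exact hb
          have h3 := k.2 hb2
          show k.1 i - 1 + 1 ≤ k.1 b - 1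
          have := hpos i; have := hpos b
          omega)
      erw [vecE, dif_pos hmono1, vecE0]
      have hsing : (⟨Function.update km1.1 i (km1.1 i + 1), hmono1⟩ : DescSeq n)
          = ⟨fun j => k'.1 j - 1, fun _ _ hab => Nat.sub_le_sub_right (k'.2 hab) 1⟩ := by
        apply Subtype.ext; funext j
        by_cases hj : j = i
        · subst hj
          show Function.update km1.1 j (km1.1 j + 1) j = k'.1 j - 1
          rw [Function.update_self, hk']
          show k.1 j - 1 + 1 = Function.update k.1 j (k.1 j + 1) j - 1
          rw [Function.update_self]
          have := hpos j; omega
        · show Function.update km1.1 i (km1.1 i + 1) j = k'.1 j - 1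
          rw [Function.update_of_ne hj, hk']
          show k.1 j - 1 = Function.update k.1 i (k.1 i + 1) j - 1
          rw [Function.update_of_ne hj]
      rw [hsing]
      erw [smul_smul, smul_smul]
      congr 1
      have htopne : (⟨n - 1, Nat.sub_lt hn0 Nat.one_pos⟩ : Fin n) ≠ i := by
        simp only [Fin.ne_iff_vne]; omega
      have htop : k'.1 ⟨n - 1, Nat.sub_lt hn0 Nat.one_pos⟩
          = k.1 ⟨n - 1, Nat.sub_lt hn0 Nat.one_pos⟩ := by
        rw [hk']; exact Function.update_of_ne htopne _ _
      have hprod' : (∏ j : Fin n, qint q (k'.1 j))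
          = qint q ((k.1 i : ℤ) + 1) * ∏ j ∈ Finset.univ \ {i}, qint q (k.1 j) := by
        rw [Finset.prod_eq_mul_prod_sdiff_singleton_of_mem (Finset.mem_univ i)]
        congr 1
        · rw [hk']
          show qint q ((Function.update k.1 i (k.1 i + 1) i : ℕ) : ℤ) = _
          rw [Function.update_self]
          push_cast
          ring_nf
        · refine Finset.prod_congr rfl fun j hj => ?_
          have hji : j ≠ i := by
            rcases Finset.mem_sdiff.mp hj with ⟨-, h2⟩
            simpa using h2
          rw [hk']
          show qint q ((Function.update k.1 i (k.1 i + 1) j : ℕ) : ℤ) = _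
          rw [Function.update_of_ne hji]
      have hprodk : (∏ j : Fin n, qint q (k.1 j))
          = qint q (k.1 i) * ∏ j ∈ Finset.univ \ {i}, qint q (k.1 j) :=
        Finset.prod_eq_mul_prod_sdiff_singleton_of_mem (Finset.mem_univ i) _
      rw [htop, hprod', hprodk, coeffE, coeffE,
        if_neg (show ¬ (i:ℕ) = 0 by omega), if_neg (show ¬ (i:ℕ) = 0 by omega)]
      have hci : ((km1.1 i : ℕ) : ℤ) = (k.1 i : ℤ) - 1 := by
        show ((k.1 i - 1 : ℕ) : ℤ) = _
        have := hpos i; omega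
      have hcp : ((km1.1 ⟨(i : ℕ) - 1,
            Nat.lt_of_le_of_lt (Nat.sub_le _ _) i.isLt⟩ : ℕ) : ℤ)
          = (k.1 ⟨(i : ℕ) - 1, Nat.lt_of_le_of_lt (Nat.sub_le _ _) i.isLt⟩ : ℤ) - 1 := by
        show ((k.1 ⟨(i : ℕ) - 1, _⟩ - 1 : ℕ) : ℤ) = _
        have := hpos ⟨(i : ℕ) - 1, Nat.lt_of_le_of_lt (Nat.sub_le _ _) i.isLt⟩
        omega
      rw [hci, hcp]
      have e1 : (k.1 i : ℤ) - 1 + 1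
            - ((k.1 ⟨(i : ℕ) - 1, Nat.lt_of_le_of_lt (Nat.sub_le _ _) i.isLt⟩ : ℤ) - 1)
          = (k.1 i : ℤ) + 1
            - (k.1 ⟨(i : ℕ) - 1, Nat.lt_of_le_of_lt (Nat.sub_le _ _) i.isLt⟩ : ℤ) := by
        ring
      have e2 : (k.1 i : ℤ) - 1 + 1 = (k.1 i : ℤ) := by ring
      rw [e1, e2]
      have h1 : qint q ((k.1 i : ℤ) + 1) ≠ 0 := qint_ne hq0 hq (by omega)
      have h2 : qint q ((k.1 i : ℤ)) ≠ 0 := qint_ne hq0 hq (by have := hpos i; omega)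
      have h3 : (1 : ℂ) - q ^ 2 ≠ 0 := one_sub_sq_ne hq
      field_simp
  · -- non-monotone case: both sides are zero
    have he : k.1 i = k.1 isuc := le_antisymm hle (not_lt.mp hlt)
    erw [vecE, dif_neg (not_mono_update k i hisl he), map_zero]
    have he2 : km1.1 i = km1.1 isuc := by
      show k.1 i - 1 = k.1 isuc - 1
      omega
    erw [vecE, dif_neg (not_mono_update km1 i hisl he2), smul_zero]


lemma scalar_id (q a t Qp A B u v w : ℂ) (hq0 : q ≠ 0) (hu : u ≠ 0) (hv : v ≠ 0)
    (hw : w ≠ 0) (hsq : (1:ℂ) - q ^ 2 ≠ 0) :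
    a * t * (u * Qp) / (1 - q ^ 2) * (1 * (A / u)) * (1 * (B / v)) -
        (q + q⁻¹) * (A / v * (1 * (a * (t * q⁻¹) * (v * Qp) / (1 - q ^ 2))) * (1 * (B / v))) +
      A / v * (1 * (B / w)) * (1 * (a * (t * q⁻¹ * q⁻¹) * (w * Qp) / (1 - q ^ 2))) = 0 := by
  have T1 : a * t * (u * Qp) / (1 - q ^ 2) * (1 * (A / u)) * (1 * (B / v))
      = a * t * Qp * A * B / ((1 - q ^ 2) * v) := by
    field_simp
  have T2 : A / v * (1 * (a * (t * q⁻¹) * (v * Qp) / (1 - q ^ 2))) * (1 * (B / v))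
      = a * t * Qp * A * B * q⁻¹ / ((1 - q ^ 2) * v) := by
    field_simp
  have T3 : A / v * (1 * (B / w)) * (1 * (a * (t * q⁻¹ * q⁻¹) * (w * Qp) / (1 - q ^ 2)))
      = a * t * Qp * A * B * q⁻¹ * q⁻¹ / ((1 - q ^ 2) * v) := by
    field_simp
  rw [T1, T2, T3]
  rw [← mul_div_assoc, div_sub_div_same, ← add_div, div_eq_zero_iff]
  left
  field_simp
  ring

lemma serre_key {n : ℕ} (hn : 2 ≤ n) (q a : ℂ) (hq0 : q ≠ 0)
    (hq : ∀ m : ℕ, 0 < m → q ^ m ≠ 1) (k : DescSeq n) :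
    opE q ⟨n-1, Nat.sub_lt (lt_of_lt_of_le two_pos hn) Nat.one_pos⟩ (opE q ⟨n-1, Nat.sub_lt (lt_of_lt_of_le two_pos hn) Nat.one_pos⟩ (vecE0 q a (lt_of_lt_of_le two_pos hn) k))
      - (q + q⁻¹) • opE q ⟨n-1, Nat.sub_lt (lt_of_lt_of_le two_pos hn) Nat.one_pos⟩
          (opE0 q a (lt_of_lt_of_le two_pos hn) (vecE q ⟨n-1, Nat.sub_lt (lt_of_lt_of_le two_pos hn) Nat.one_pos⟩ k))
      + opE0 q a (lt_of_lt_of_le two_pos hn) (opE q ⟨n-1, Nat.sub_lt (lt_of_lt_of_le two_pos hn) Nat.one_pos⟩ (vecE q ⟨n-1, Nat.sub_lt (lt_of_lt_of_le two_pos hn) Nat.one_pos⟩ k)) = 0 := by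
  have hn0 : 0 < n := by omega
  set m : Fin n := ⟨n-1, Nat.sub_lt hn0 Nat.one_pos⟩ with hm
  have hvecE : ∀ l : DescSeq n, vecE q m l
      = coeffE q m l • (id (Finsupp.single (raiseSeq hn0 l) 1) : Vn n) := fun l => by
    rw [vecE]
    exact dif_pos (show Monotone (Function.update l.1 m (l.1 m + 1)) from
      (raiseSeq hn0 l).2)
  have hvecE0 : ∀ l : DescSeq n, vecE0 q a hn0 l
      = (a * q ^ ((1 : ℤ) - (l.1 m : ℤ)) * (∏ j : Fin n, qint q (l.1 j)) / (1 - q ^ 2))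
        • (id (Finsupp.single (lowSeq l) 1) : Vn n) := fun l => rfl
  have hmval : (m : ℕ) = n - 1 := rfl
  have h0m : (⟨0, by omega⟩ : Fin n) ≠ m := by
    simp only [Fin.ne_iff_vne, hmval]; omega
  have hrm : ∀ l : DescSeq n, (raiseSeq hn0 l).1 m = l.1 m + 1 := fun l =>
    Function.update_self _ _ _
  have hrj : ∀ (l : DescSeq n) (j : Fin n), j ≠ m → (raiseSeq hn0 l).1 j = l.1 j :=
    fun l j hj => Function.update_of_ne hj _ _
  have hlj : ∀ (l : DescSeq n) (j : Fin n), (lowSeq l).1 j = l.1 j - 1 := fun l j => rfl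
  show opE q m (opE q m (vecE0 q a hn0 k))
      - (q + q⁻¹) • opE q m (opE0 q a hn0 (vecE q m k))
      + opE0 q a hn0 (opE q m (vecE q m k)) = 0
  have hs1 : ∀ (i : Fin n) (l : DescSeq n) (b : ℂ),
      opE q i (id (Finsupp.single l b) : Vn n) = b • vecE q i l := fun i l b => opE_single q i l b
  have hs0 : ∀ (l : DescSeq n) (b : ℂ),
      opE0 q a hn0 (id (Finsupp.single l b) : Vn n) = b • vecE0 q a hn0 l :=
    fun l b => opE0_single q a hn0 l b
  simp only [hvecE0, hvecE, map_smul, hs1, hs0, one_smul, smul_smul]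
  by_cases hz : k.1 ⟨0, by omega⟩ = 0
  · -- zero case
    have pz : ∀ l : DescSeq n, l.1 ⟨0, by omega⟩ = 0 →
        (∏ j : Fin n, qint q (l.1 j)) = 0 := fun l hl => by
      exact Finset.prod_eq_zero (Finset.mem_univ (⟨0, by omega⟩ : Fin n))
        (by rw [hl]; simpa using qint_zero q)
    rw [pz k hz, pz (raiseSeq hn0 k) (by rw [hrj k _ h0m]; exact hz),
      pz (raiseSeq hn0 (raiseSeq hn0 k)) (by rw [hrj _ _ h0m, hrj k _ h0m]; exact hz)]
    simp
  · -- positive case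
    have hpos : ∀ j, 1 ≤ k.1 j := fun j => by
      have := k.2 (show (⟨0, by omega⟩ : Fin n) ≤ j by
        rw [Fin.le_def]; exact Nat.zero_le _)
      omega
    have e1 : raiseSeq hn0 (raiseSeq hn0 (lowSeq k)) = lowSeq (raiseSeq hn0 (raiseSeq hn0 k)) := by
      apply Subtype.ext; funext j
      by_cases hj : j = m
      · subst hj
        simp only [hrm, hlj]
        have := hpos m; omega
      · rw [hrj _ _ hj, hrj _ _ hj, hlj, hlj, hrj _ _ hj, hrj _ _ hj]
    have e2 : raiseSeq hn0 (lowSeq (raiseSeq hn0 k)) = lowSeq (raiseSeq hn0 (raiseSeq hn0 k)) := by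
      apply Subtype.ext; funext j
      by_cases hj : j = m
      · subst hj
        simp only [hrm, hlj]
        omega
      · rw [hrj _ _ hj, hlj, hrj _ _ hj, hlj, hrj _ _ hj, hrj _ _ hj]
    rw [e1, e2, ← sub_smul, ← add_smul]
    apply smul_eq_zero_of_left
    set pi : Fin n := ⟨(m:ℕ) - 1, Nat.lt_of_le_of_lt (Nat.sub_le _ _) m.isLt⟩ with hpi
    have hpim : pi ≠ m := by
      rw [Fin.ne_iff_vne, hpi]
      show (m:ℕ) - 1 ≠ (m:ℕ)
      rw [hmval]; omega
    have hcoef : ∀ l : DescSeq n, coeffE q m l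
        = qint q ((l.1 m : ℤ) + 1 - (l.1 pi : ℤ)) / qint q ((l.1 m : ℤ) + 1) := fun l => by
      rw [coeffE, if_neg (by rw [hmval]; omega)]
    have hrpi : ∀ l : DescSeq n, (raiseSeq hn0 l).1 pi = l.1 pi := fun l => hrj l pi hpim
    have hQ : ∀ l : DescSeq n, (∀ j, j ≠ m → l.1 j = k.1 j) →
        (∏ j : Fin n, qint q (l.1 j))
          = qint q (l.1 m) * ∏ j ∈ Finset.univ \ {m}, qint q (k.1 j) := fun l hl => by
      rw [Finset.prod_eq_mul_prod_sdiff_singleton_of_mem (Finset.mem_univ m)]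
      congr 1
      refine Finset.prod_congr rfl fun j hj => ?_
      have hjm : j ≠ m := by simpa using (Finset.mem_sdiff.mp hj).2
      rw [hl j hjm]
    have pk := hQ k (fun j _ => rfl)
    have prk := hQ (raiseSeq hn0 k) (fun j hj => hrj k j hj)
    have prrk := hQ (raiseSeq hn0 (raiseSeq hn0 k)) (fun j hj => by
      rw [hrj _ _ hj, hrj _ _ hj])
    obtain ⟨K, hK⟩ : ∃ t, k.1 m = t + 1 := ⟨k.1 m - 1, by have := hpos m; omega⟩
    obtain ⟨P, hP⟩ : ∃ t, k.1 pi = t + 1 := ⟨k.1 pi - 1, by have := hpos pi; omega⟩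
    simp only [hcoef]
    simp only [pk, prk, prrk, hrm, hlj, hrpi]
    simp only [hK, hP, Nat.add_sub_cancel]
    push_cast
    have c1 : ((K:ℤ) + 1 + 1 - ((P:ℤ) + 1)) = (K:ℤ) + 1 - (P:ℤ) := by ring
    have c2 : ((K:ℤ) + 1 + 1 + 1 - ((P:ℤ) + 1)) = (K:ℤ) + 1 + 1 - (P:ℤ) := by ring
    rw [c1, c2]
    have z2 : q ^ ((1:ℤ) - ((K:ℤ) + 1 + 1)) = q ^ ((1:ℤ) - ((K:ℤ) + 1)) * q⁻¹ := by
      rw [show (1:ℤ) - ((K:ℤ)+1+1) = (1 - ((K:ℤ)+1)) + (-1) by ring, zpow_add₀ hq0,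
        zpow_neg_one]
    have z3 : q ^ ((1:ℤ) - ((K:ℤ) + 1 + 1 + 1))
        = q ^ ((1:ℤ) - ((K:ℤ) + 1)) * q⁻¹ * q⁻¹ := by
      rw [show (1:ℤ) - ((K:ℤ)+1+1+1) = (1 - ((K:ℤ)+1)) + (-1) + (-1) by ring,
        zpow_add₀ hq0, zpow_add₀ hq0, zpow_neg_one]
    rw [z2, z3]
    have hu : qint q ((K:ℤ) + 1) ≠ 0 := qint_ne hq0 hq (by omega)
    have hv : qint q ((K:ℤ) + 1 + 1) ≠ 0 := qint_ne hq0 hq (by omega)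
    have hw : qint q ((K:ℤ) + 1 + 1 + 1) ≠ 0 := qint_ne hq0 hq (by omega)
    have hsq : (1 : ℂ) - q ^ 2 ≠ 0 := one_sub_sq_ne hq
    generalize q ^ ((1:ℤ) - ((K:ℤ) + 1)) = t
    generalize (∏ j ∈ Finset.univ \ {m}, qint q ((k.1 j : ℤ))) = Qp
    generalize qint q ((K:ℤ) + 1 - (P:ℤ)) = A
    generalize qint q ((K:ℤ) + 1 + 1 - (P:ℤ)) = B
    generalize hU : qint q ((K:ℤ) + 1) = u at hu ⊢
    generalize hV : qint q ((K:ℤ) + 1 + 1) = v at hv ⊢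
    generalize hW : qint q ((K:ℤ) + 1 + 1 + 1) = w at hw ⊢
    exact scalar_id q a t Qp A B u v w hq0 hu hv hw hsq

end Stmt18Aux

theorem stmt18 (n : ℕ) (hn : 2 ≤ n) (q a : ℂ) (hq0 : q ≠ 0)
    (hq : ∀ m : ℕ, 0 < m → q ^ m ≠ 1) (ha : a ≠ 0) :
    (∀ i : Fin n, 1 ≤ (i : ℕ) → (i : ℕ) ≤ n - 2 →
      opE0 q a (show 0 < n by omega) * opE q i = opE q i * opE0 q a (show 0 < n by omega)) ∧
    (opE q (⟨n - 1, by omega⟩ : Fin n) * opE q ⟨n - 1, by omega⟩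
          * opE0 q a (show 0 < n by omega)
        - (q + q⁻¹) • (opE q (⟨n - 1, by omega⟩ : Fin n)
            * opE0 q a (show 0 < n by omega) * opE q ⟨n - 1, by omega⟩)
        + opE0 q a (show 0 < n by omega) * opE q (⟨n - 1, by omega⟩ : Fin n)
            * opE q ⟨n - 1, by omega⟩ = 0) := by
  constructor
  · intro i hi1 hi2
    refine Stmt18Aux.end_ext fun k b => ?_
    simp only [Module.End.mul_apply]
    have hs1 : opE q i (id (Finsupp.single k b) : Vn n) = b • vecE q i k :=
      Stmt18Aux.opE_single q i k b
    have hs0 : opE0 q a (show 0 < n by omega) (id (Finsupp.single k b) : Vn n)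
        = b • vecE0 q a (show 0 < n by omega) k := Stmt18Aux.opE0_single q a _ k b
    rw [hs1, hs0, map_smul, map_smul]
    exact congrArg (b • ·) (Stmt18Aux.comm_key hn q a hq0 hq i hi1 hi2 k)
  · refine Stmt18Aux.end_ext (g := 0) fun k b => ?_
    simp only [LinearMap.add_apply, LinearMap.sub_apply, LinearMap.smul_apply,
      Module.End.mul_apply, LinearMap.zero_apply]
    have hs1 : opE q (⟨n - 1, by omega⟩ : Fin n) (id (Finsupp.single k b) : Vn n)
        = b • vecE q ⟨n - 1, by omega⟩ k := Stmt18Aux.opE_single q _ k b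
    have hs0 : opE0 q a (show 0 < n by omega) (id (Finsupp.single k b) : Vn n)
        = b • vecE0 q a (show 0 < n by omega) k := Stmt18Aux.opE0_single q a _ k b
    rw [hs0, hs1]
    simp only [map_smul]
    rw [smul_comm (q + q⁻¹) b, ← smul_sub, ← smul_add,
      Stmt18Aux.serre_key hn q a hq0 hq k, smul_zero]


end
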